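/- Every finite 2-group G is mixable, and its mixing length equals log₂|G|. -/

import Mathlib

open scoped Classical

/-- The distribution of the random subproduct `g 0 ^ ε 0 * ⋯ * g (k-1) ^ ε (k-1)`,
where `ε i` are independent Bernoulli variables with parameters `p i`. -/
noncomputable def subprodDist {G : Type*} [Group G] {k : ℕ} (g : Fin k → G)
    (p : Fin k → ℝ) (a : G) : ℝ :=
  ∑ ε : Fin k → Bool,
    (∏ i : Fin k, if ε i then p i else 1 - p i) *
      (if (List.ofFn fun i => if ε i then g i else 1).prod = a then 1 else 0)

/-- `(g, p)` is a mixing sequence: valid probabilities whose random subproduct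
is uniform on `G`. -/
def IsMixingSeq {G : Type*} [Group G] {k : ℕ} (g : Fin k → G) (p : Fin k → ℝ) : Prop :=
  (∀ i, 0 ≤ p i ∧ p i ≤ 1) ∧ ∀ a : G, subprodDist g p a = 1 / (Nat.card G : ℝ)

/-- A group is mixable if it admits a mixing sequence. -/
def Mixable (G : Type*) [Group G] : Prop :=
  ∃ (k : ℕ) (g : Fin k → G) (p : Fin k → ℝ), IsMixingSeq g p

/-- The mixing length of a group: minimal length of a mixing sequence. -/
noncomputable def mixlen (G : Type*) [Group G] : ℕ :=
  sInf {k | ∃ (g : Fin k → G) (p : Fin k → ℝ), IsMixingSeq g p}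

lemma subprodDist_cons {G : Type*} [Group G] {k : ℕ} (t : G) (g : Fin k → G)
    (q : ℝ) (p : Fin k → ℝ) (a : G) :
    subprodDist (Fin.cons t g) (Fin.cons q p) a
      = q * subprodDist g p (t⁻¹ * a) + (1 - q) * subprodDist g p a := by
  unfold subprodDist
  rw [← Equiv.sum_comp (Fin.consEquiv (fun _ : Fin (k+1) => Bool))]
  rw [Fintype.sum_prod_type, Fintype.sum_bool]
  congr 1
  · rw [Finset.mul_sum]
    refine Finset.sum_congr rfl fun ε _ => ?_
    simp only [Fin.consEquiv_apply, Fin.prod_univ_succ, Fin.cons_zero, Fin.cons_succ,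
      List.ofFn_succ, List.prod_cons, if_true, mul_assoc]
    congr 2
    have : (t * (List.ofFn fun i => if ε i then g i else 1).prod = a)
        ↔ ((List.ofFn fun i => if ε i then g i else 1).prod = t⁻¹ * a) := by
      rw [eq_inv_mul_iff_mul_eq]
    simp [this]
  · rw [Finset.mul_sum]
    refine Finset.sum_congr rfl fun ε _ => ?_
    simp only [Fin.consEquiv_apply, Fin.prod_univ_succ, Fin.cons_zero, Fin.cons_succ,
      List.ofFn_succ, List.prod_cons, Bool.false_eq_true, if_false, one_mul, mul_assoc]

lemma subprodDist_subtype_prod {G : Type*} [Group G] (H : Subgroup G) {k : ℕ}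
    (g : Fin k → H) (ε : Fin k → Bool) :
    (List.ofFn fun i => if ε i then (g i : G) else 1).prod
      = ((List.ofFn fun i => if ε i then g i else 1).prod : H) := by
  rw [SubmonoidClass.coe_list_prod, List.map_ofFn]
  refine congrArg List.prod (congrArg List.ofFn ?_)
  funext i
  by_cases h : ε i <;> simp [h]

lemma subprodDist_subtype {G : Type*} [Group G] (H : Subgroup G) {k : ℕ}
    (g : Fin k → H) (p : Fin k → ℝ) (b : H) :
    subprodDist (fun i => (g i : G)) p (b : G) = subprodDist g p b := by
  unfold subprodDist
  refine Finset.sum_congr rfl fun ε _ => ?_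
  rw [subprodDist_subtype_prod]
  congr 1
  simp [Subtype.ext_iff]

lemma subprodDist_subtype_zero {G : Type*} [Group G] (H : Subgroup G) {k : ℕ}
    (g : Fin k → H) (p : Fin k → ℝ) (a : G) (ha : a ∉ H) :
    subprodDist (fun i => (g i : G)) p a = 0 := by
  unfold subprodDist
  refine Finset.sum_eq_zero fun ε _ => ?_
  rw [subprodDist_subtype_prod]
  have h2 : ((List.ofFn fun i => if ε i then g i else 1).prod : G) ≠ a := by
    intro hc; exact ha (hc ▸ ((List.ofFn fun i => if ε i then g i else 1).prod).2)
  rw [if_neg h2, mul_zero]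

lemma eq_of_card_two {α : Type*} [Finite α] (h : Nat.card α = 2) {x y z : α}
    (hx : x ≠ z) (hy : y ≠ z) : x = y := by
  by_contra hxy
  cases nonempty_fintype α
  have h3 : ({x, y, z} : Finset α).card = 3 := by
    rw [Finset.card_insert_of_notMem (by simp [hxy, hx]),
      Finset.card_insert_of_notMem (by simp [hy]), Finset.card_singleton]
  have hle := Finset.card_le_univ ({x, y, z} : Finset α)
  rw [← Nat.card_eq_fintype_card, h] at hle
  omega

lemma mixing_lower {G : Type*} [Group G] [Finite G] {n k : ℕ} (h : Nat.card G = 2 ^ n)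
    {g : Fin k → G} {p : Fin k → ℝ} (hm : IsMixingSeq g p) : n ≤ k := by
  have hsurj : Function.Surjective
      (fun ε : Fin k → Bool => (List.ofFn fun i => if ε i then g i else 1).prod) := by
    intro a
    by_contra hc
    push_neg at hc
    have h0 : subprodDist g p a = 0 :=
      Finset.sum_eq_zero fun ε _ => by rw [if_neg (hc ε), mul_zero]
    have h1 := hm.2 a
    rw [h0] at h1
    have h2 : (0:ℝ) < 1 / (Nat.card G : ℝ) := by rw [h]; positivity
    rw [← h1] at h2; exact lt_irrefl _ h2
  have hle := Nat.card_le_card_of_surjective _ hsurj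
  rw [h, Nat.card_eq_fintype_card] at hle
  simp only [Fintype.card_fun, Fintype.card_bool, Fintype.card_fin] at hle
  exact (Nat.pow_le_pow_iff_right (by norm_num)).mp hle

lemma mixing_upper : ∀ (n : ℕ) (G : Type u) [Group G] [Finite G],
    Nat.card G = 2 ^ n → ∃ (g : Fin n → G) (p : Fin n → ℝ), IsMixingSeq g p := by
  intro n
  induction n with
  | zero =>
    intro G _ _ h
    haveI : Subsingleton G := by
      rw [pow_zero] at h
      exact (Nat.card_eq_one_iff_unique.mp h).1
    refine ⟨Fin.elim0, Fin.elim0, fun i => i.elim0, fun a => ?_⟩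
    have ha : a = 1 := Subsingleton.elim a 1
    rw [pow_zero] at h
    simp [subprodDist, ha, h]
  | succ n IH =>
    intro G _ _ h
    haveI : Fact (Nat.Prime 2) := ⟨Nat.prime_two⟩
    have hd : (2:ℕ) ^ n ∣ Nat.card G := h ▸ pow_dvd_pow 2 n.le_succ
    obtain ⟨H, hH⟩ := Sylow.exists_subgroup_card_pow_prime 2 hd
    obtain ⟨g', p', hmix⟩ := IH ↥H hH
    have hne : H ≠ ⊤ := by
      intro e
      rw [e, Subgroup.card_top, h] at hH
      exact absurd (Nat.pow_right_injective le_rfl hH) (by omega)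
    obtain ⟨t, ht⟩ : ∃ t, t ∉ H := by
      by_contra hc; push_neg at hc
      exact hne ((Subgroup.eq_top_iff' H).mpr hc)
    have hidx : Nat.card (G ⧸ H) = 2 := by
      have := H.index_mul_card
      rw [hH, h, pow_succ] at this
      have h2 : H.index = 2 := Nat.eq_of_mul_eq_mul_right (pow_pos two_pos n)
        (by omega)
      exact h2
    refine ⟨Fin.cons t (fun i => (g' i : G)), Fin.cons (1/2) p', ?_, ?_⟩
    · intro i
      refine Fin.cases ?_ (fun j => ?_) i
      · simp [Fin.cons_zero]; norm_num
      · simpa using hmix.1 j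
    · intro a
      rw [subprodDist_cons]
      have hcast : (Nat.card G : ℝ) = 2 ^ (n + 1) := by rw [h]; push_cast; ring
      have hcastH : (Nat.card H : ℝ) = 2 ^ n := by rw [hH]; push_cast; ring
      by_cases ha : a ∈ H
      · have hta : t⁻¹ * a ∉ H := by
          intro hc
          exact ht (by simpa using H.mul_mem hc (H.inv_mem ha))
        rw [subprodDist_subtype_zero H g' p' _ hta]
        have := subprodDist_subtype H g' p' ⟨a, ha⟩
        rw [this, hmix.2 ⟨a, ha⟩, hcastH, hcast]
        ring
      · have hta : t⁻¹ * a ∈ H := by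
          have h1 : (t : G ⧸ H) ≠ ((1 : G) : G ⧸ H) := by
            intro e; exact ht (by simpa using QuotientGroup.eq.mp e)
          have h2 : (a : G ⧸ H) ≠ ((1 : G) : G ⧸ H) := by
            intro e; exact ha (by simpa using QuotientGroup.eq.mp e)
          have := eq_of_card_two hidx h1 h2
          exact QuotientGroup.eq.mp this
        rw [subprodDist_subtype_zero H g' p' a ha]
        have := subprodDist_subtype H g' p' ⟨t⁻¹ * a, hta⟩
        rw [this, hmix.2 ⟨t⁻¹ * a, hta⟩, hcastH, hcast]
        ring

/-- Every finite 2-group is mixable, and its mixing length equals `log₂ |G|`. -/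
theorem mixable_two_group (G : Type*) [Group G] [Finite G] (n : ℕ)
    (h : Nat.card G = 2 ^ n) : Mixable G ∧ mixlen G = n := by
  obtain ⟨g, p, hm⟩ := mixing_upper n G h
  have hmem : n ∈ {k | ∃ (g : Fin k → G) (p : Fin k → ℝ), IsMixingSeq g p} := ⟨g, p, hm⟩
  refine ⟨⟨n, g, p, hm⟩, le_antisymm (Nat.sInf_le hmem) ?_⟩
  obtain ⟨g', p', hm'⟩ := Nat.sInf_mem (⟨n, hmem⟩ : Set.Nonempty _)
  exact mixing_lower h hm'
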